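/- Let G be a finite graph, p, q ≥ 0 integers, and μ : 2^{V(G)} → ℕ a monotone function (X ⊆ Y implies μ(X) ≤ μ(Y)). If every vertex v ∈ V(G) is contained in some set C with μ(C) ≤ p and d(C) ≤ q, then V(G) can be partitioned into sets C₁, …, C_t such that μ(C_i) ≤ p and d(C_i) ≤ q for each i. -/

import Mathlib

open Finset

/-- The set of edges of `G` with exactly one endpoint in `X`. -/
def cutSet {V : Type*} [Fintype V] [DecidableEq V] (G : SimpleGraph V) [DecidableRel G.Adj]
    (X : Finset V) : Finset (Sym2 V) :=
  G.edgeFinset.filter (fun e =>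
    ∃ a ∈ (univ : Finset V), ∃ b ∈ (univ : Finset V), e = s(a, b) ∧ a ∈ X ∧ b ∉ X)

/-- `d(X)`: the number of edges of `G` leaving `X`. -/
def cutCard {V : Type*} [Fintype V] [DecidableEq V] (G : SimpleGraph V) [DecidableRel G.Adj]
    (X : Finset V) : ℕ :=
  (cutSet G X).card

lemma cut_pred_iff {V : Type*} [Fintype V] (X : Finset V) (x y : V) :
    (∃ a ∈ (univ : Finset V), ∃ b ∈ (univ : Finset V), s(x,y) = s(a, b) ∧ a ∈ X ∧ b ∉ X)
      ↔ ((x ∈ X ∧ y ∉ X) ∨ (y ∈ X ∧ x ∉ X)) := by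
  constructor
  · rintro ⟨a, -, b, -, h, ha, hb⟩
    rw [Sym2.eq_iff] at h
    rcases h with ⟨rfl, rfl⟩ | ⟨rfl, rfl⟩
    · exact Or.inl ⟨ha, hb⟩
    · exact Or.inr ⟨ha, hb⟩
  · rintro (⟨h1, h2⟩ | ⟨h1, h2⟩)
    · exact ⟨x, mem_univ x, y, mem_univ y, rfl, h1, h2⟩
    · exact ⟨y, mem_univ y, x, mem_univ x, Sym2.eq_swap, h1, h2⟩

lemma cutCard_posimodular {V : Type*} [Fintype V] [DecidableEq V] (G : SimpleGraph V)
    [DecidableRel G.Adj] (A B : Finset V) :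
    cutCard G (A \ B) + cutCard G (B \ A) ≤ cutCard G A + cutCard G B := by
  simp only [cutCard, cutSet, card_filter]
  rw [← Finset.sum_add_distrib, ← Finset.sum_add_distrib]
  apply Finset.sum_le_sum
  intro e _
  induction e using Sym2.inductionOn with
  | hf x y =>
    simp only [cut_pred_iff]
    simp only [Finset.mem_sdiff]
    by_cases hxa : x ∈ A <;> by_cases hxb : x ∈ B <;>
      by_cases hya : y ∈ A <;> by_cases hyb : y ∈ B <;>
      simp [hxa, hxb, hya, hyb]

lemma partition_aux {V : Type*} [Fintype V] [DecidableEq V]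
    (G : SimpleGraph V) [DecidableRel G.Adj] (μ : Finset V → ℕ)
    (hmono : ∀ X Y : Finset V, X ⊆ Y → μ X ≤ μ Y) (p q : ℕ) :
    ∀ n (P : Finset (Finset V)), (∑ C ∈ P, C.card) = n →
    (∀ C ∈ P, μ C ≤ p ∧ cutCard G C ≤ q) →
    (∀ v : V, ∃ C ∈ P, v ∈ C) →
    ∃ Q : Finset (Finset V),
      (∀ C ∈ Q, C.Nonempty) ∧
      (∀ C ∈ Q, μ C ≤ p ∧ cutCard G C ≤ q) ∧
      (∀ v : V, ∃! C : Finset V, C ∈ Q ∧ v ∈ C) := by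
  intro n
  induction n using Nat.strong_induction_on with
  | _ n IH =>
    intro P hsum hclus hcov
    by_cases hcross : ∃ C ∈ P, ∃ D ∈ P, C ≠ D ∧ (C ∩ D).Nonempty
    · obtain ⟨C, hC, D, hD, hne, hint⟩ := hcross
      have hposi := cutCard_posimodular G C D
      have hCq := (hclus C hC).2
      have hDq := (hclus D hD).2
      -- one of the two differences is a cluster; by symmetry handle both cases
      have key : ∀ (C D : Finset V), C ∈ P → D ∈ P → C ≠ D → (C ∩ D).Nonempty →
          cutCard G (C \ D) ≤ q →
          ∃ Q : Finset (Finset V),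
            (∀ E ∈ Q, E.Nonempty) ∧
            (∀ E ∈ Q, μ E ≤ p ∧ cutCard G E ≤ q) ∧
            (∀ v : V, ∃! E : Finset V, E ∈ Q ∧ v ∈ E) := by
        intro C D hC hD hne hint hcut
        set P' : Finset (Finset V) := insert (C \ D) (P.erase C) with hP'
        have hsum' : (∑ E ∈ P', E.card) < n := by
          have h1 : (∑ E ∈ P', E.card) ≤ (C \ D).card + ∑ E ∈ P.erase C, E.card := by
            by_cases hmem : (C \ D) ∈ P.erase C
            · rw [hP', Finset.insert_eq_self.mpr hmem]; omega
            · rw [hP', Finset.sum_insert hmem]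
          have h2 : (C \ D).card < C.card := by
            apply Finset.card_lt_card
            constructor
            · exact Finset.sdiff_subset
            · intro hsub
              obtain ⟨x, hx⟩ := hint
              have := hsub (Finset.mem_inter.mp hx).1
              exact (Finset.mem_sdiff.mp this).2 (Finset.mem_inter.mp hx).2
          have h3 : C.card + ∑ E ∈ P.erase C, E.card = n := by
            rw [← hsum, Finset.add_sum_erase _ _ hC]
          omega
        apply IH _ hsum' P' rfl
        · intro E hE
          rcases Finset.mem_insert.mp hE with rfl | hE'
          · exact ⟨le_trans (hmono _ _ Finset.sdiff_subset) (hclus C hC).1, hcut⟩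
          · exact hclus E (Finset.mem_of_mem_erase hE')
        · intro v
          obtain ⟨E, hE, hvE⟩ := hcov v
          by_cases hEC : E = C
          · subst hEC
            by_cases hvD : v ∈ D
            · exact ⟨D, Finset.mem_insert_of_mem (Finset.mem_erase.mpr ⟨hne.symm, hD⟩), hvD⟩
            · exact ⟨E \ D, Finset.mem_insert_self _ _, Finset.mem_sdiff.mpr ⟨hvE, hvD⟩⟩
          · exact ⟨E, Finset.mem_insert_of_mem (Finset.mem_erase.mpr ⟨hEC, hE⟩), hvE⟩
      by_cases h1 : cutCard G (C \ D) ≤ q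
      · exact key C D hC hD hne hint h1
      · have h2 : cutCard G (D \ C) ≤ q := by omega
        exact key D C hD hC hne.symm (by rwa [Finset.inter_comm] at hint) h2
    · push_neg at hcross
      refine ⟨P.filter (·.Nonempty), ?_, ?_, ?_⟩
      · intro E hE; exact (Finset.mem_filter.mp hE).2
      · intro E hE; exact hclus E (Finset.mem_filter.mp hE).1
      · intro v
        obtain ⟨C, hC, hvC⟩ := hcov v
        refine ⟨C, ⟨Finset.mem_filter.mpr ⟨hC, ⟨v, hvC⟩⟩, hvC⟩, ?_⟩
        rintro E ⟨hE, hvE⟩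
        by_contra hne
        exact Finset.not_nonempty_iff_eq_empty.mpr (hcross E (Finset.mem_filter.mp hE).1 C hC hne)
          ⟨v, Finset.mem_inter.mpr ⟨hvE, hvC⟩⟩

/-- If every vertex is contained in some `(μ,p,q)`-cluster, then the vertex set can be
partitioned into `(μ,p,q)`-clusters. -/
theorem partition_of_clusters {V : Type*} [Fintype V] [DecidableEq V]
    (G : SimpleGraph V) [DecidableRel G.Adj] (μ : Finset V → ℕ)
    (hmono : ∀ X Y : Finset V, X ⊆ Y → μ X ≤ μ Y) (p q : ℕ)
    (hcover : ∀ v : V, ∃ C : Finset V, v ∈ C ∧ μ C ≤ p ∧ cutCard G C ≤ q) :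
    ∃ P : Finset (Finset V),
      (∀ C ∈ P, C.Nonempty) ∧
      (∀ C ∈ P, μ C ≤ p ∧ cutCard G C ≤ q) ∧
      (∀ v : V, ∃! C : Finset V, C ∈ P ∧ v ∈ C) := by
  classical
  set P₀ : Finset (Finset V) := Finset.univ.image (fun v => (hcover v).choose) with hP₀
  apply partition_aux G μ hmono p q (∑ C ∈ P₀, C.card) P₀ rfl
  · intro C hC
    obtain ⟨v, -, rfl⟩ := Finset.mem_image.mp hC
    exact (hcover v).choose_spec.2
  · intro v
    exact ⟨(hcover v).choose, Finset.mem_image.mpr ⟨v, Finset.mem_univ v, rfl⟩,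
      (hcover v).choose_spec.1⟩
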